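/- Let q ≥ 3 be an odd integer, d ≥ 1 and t ≥ 1 integers, and let v_1, v_1', v_2, …, v_t ∈ {−(q−1)/2, …, (q−1)/2}^d. Let s be the carry string of v_1 + v_2 + ⋯ + v_t and let s' be the carry string of v_1' + v_2 + ⋯ + v_t. If s_j ≡ s'_j (mod 2) for every j ∈ {1, …, d}, then s = s'. -/
import Mathlib


/-- The carry string of a sum whose coordinatewise sums (0-indexed) are given by
`w : ℕ → ℤ`, for an odd modulus `q`.  `carryString q w j` is the carry `s_{j+1}`:
the unique integer `s` with `w j + s_{j-1} ∈ {s*q - (q-1)/2, …, s*q + (q-1)/2}`. -/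
def carryString (q : ℤ) (w : ℕ → ℤ) : ℕ → ℤ
  | 0 => Int.fdiv (w 0 + (q - 1) / 2) q
  | j + 1 => Int.fdiv (w (j + 1) + carryString q w j + (q - 1) / 2) q

lemma fdiv_key (q x y : ℤ) (hq : 3 ≤ q) (hx : x - y ≤ q - 1) (hy : y - x ≤ q - 1)
    (hpar : x.fdiv q % 2 = y.fdiv q % 2) : x.fdiv q = y.fdiv q := by
  have hq0 : (0:ℤ) ≤ q := by omega
  rw [Int.fdiv_eq_ediv_of_nonneg _ hq0] at hpar ⊢
  rw [Int.fdiv_eq_ediv_of_nonneg _ hq0] at hpar ⊢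
  have h1 : x / q ≤ y / q + 1 := by
    have := Int.ediv_le_ediv (by omega : (0:ℤ) < q) (show x ≤ y + 1 * q by omega)
    rwa [Int.add_mul_ediv_right _ _ (by omega : q ≠ 0)] at this
  have h2 : y / q ≤ x / q + 1 := by
    have := Int.ediv_le_ediv (by omega : (0:ℤ) < q) (show y ≤ x + 1 * q by omega)
    rwa [Int.add_mul_ediv_right _ _ (by omega : q ≠ 0)] at this
  omega

/-- if two sums `v₁ + v₂ + ⋯ + v_t` and `v₁' + v₂ + ⋯ + v_t` of vectors with
entries in `{-(q-1)/2, …, (q-1)/2}` have carry strings agreeing modulo 2 in every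
coordinate, then the carry strings are equal. -/
theorem stmt4 (q : ℤ) (hq : 3 ≤ q) (hodd : Odd q) (d t : ℕ) (hd : 1 ≤ d) (ht : 1 ≤ t)
    (v : Fin t → ℕ → ℤ) (v₁' : ℕ → ℤ)
    (hv : ∀ i, ∀ j < d, v i j ∈ Set.Icc (-((q - 1) / 2)) ((q - 1) / 2))
    (hv' : ∀ j < d, v₁' j ∈ Set.Icc (-((q - 1) / 2)) ((q - 1) / 2))
    (hpar : ∀ j < d,
      carryString q (fun l => ∑ i, v i l) j % 2 =
        carryString q (fun l => v₁' l + ∑ i ∈ Finset.univ.erase (⟨0, ht⟩ : Fin t), v i l)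
          j % 2) :
    ∀ j < d,
      carryString q (fun l => ∑ i, v i l) j =
        carryString q (fun l => v₁' l + ∑ i ∈ Finset.univ.erase (⟨0, ht⟩ : Fin t), v i l)
          j := by
  obtain ⟨k, hk⟩ := hodd
  set w : ℕ → ℤ := fun l => ∑ i, v i l with hw
  set w' : ℕ → ℤ := fun l => v₁' l + ∑ i ∈ Finset.univ.erase (⟨0, ht⟩ : Fin t), v i l with hw'
  have hdiff : ∀ l < d, w l - w' l ≤ q - 1 ∧ w' l - w l ≤ q - 1 := by
    intro l hl
    have hsplit : w l = v ⟨0, ht⟩ l + ∑ i ∈ Finset.univ.erase (⟨0, ht⟩ : Fin t), v i l := by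
      rw [hw]
      exact (Finset.add_sum_erase _ _ (Finset.mem_univ _)).symm
    have h1 := hv ⟨0, ht⟩ l hl
    have h2 := hv' l hl
    simp only [Set.mem_Icc] at h1 h2
    have : w l - w' l = v ⟨0, ht⟩ l - v₁' l := by
      rw [hsplit, hw']; ring
    omega
  intro j
  induction j with
  | zero =>
    intro hj
    have hd0 := hdiff 0 hj
    exact fdiv_key q _ _ hq (by omega) (by omega) (hpar 0 hj)
  | succ n ih =>
    intro hj
    have hn : n < d := by omega
    have hIH := ih hn
    have hdn := hdiff (n + 1) hj
    have hp := hpar (n + 1) hj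
    simp only [carryString] at hp ⊢
    rw [hIH] at hp ⊢
    exact fdiv_key q _ _ hq (by omega) (by omega) hp
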